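/- Let g = [[a,b],[conj b, conj a]] be an element of SU(1,1) and let f : ℂ → ℂ be continuous. Then ∫_0^{2π} f((b + conj(a)·e^{iφ})/(a + conj(b)·e^{iφ})) · |a + conj(b)·e^{iφ}|^{−2} dφ = ∫_0^{2π} f(e^{iφ}) dφ. In other words, the Möbius transformation M_g of the unit circle has Jacobian |a + conj(b)·z|^{−2} with respect to the rotation-invariant measure on the circle. -/

import Mathlib

open ComplexConjugate

theorem polarA (z : ℂ) (hz : 0 < z.re) :
    (‖z‖ : ℂ) * Complex.exp (Real.arctan (z.im / z.re) * Complex.I) = z := by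
  have hz0 : z ≠ 0 := fun h => by simp [h] at hz
  have habs : (0:ℝ) < ‖z‖ := norm_pos_iff.mpr hz0
  have h1 : Real.sqrt (1 + (z.im / z.re) ^ 2) = ‖z‖ / z.re := by
    have h2 : 1 + (z.im / z.re) ^ 2 = (‖z‖ / z.re) ^ 2 := by
      rw [div_pow, div_pow, Complex.sq_norm, Complex.normSq_apply]
      field_simp
    rw [h2, Real.sqrt_sq (by positivity)]
  rw [Complex.exp_mul_I, ← Complex.ofReal_cos, ← Complex.ofReal_sin,
    Real.cos_arctan, Real.sin_arctan, h1]
  have e1 : (1:ℝ) / (‖z‖ / z.re) = z.re / ‖z‖ := by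
    field_simp
  have e2 : z.im / z.re / (‖z‖ / z.re) = z.im / ‖z‖ := by
    field_simp
  rw [e1, e2]
  push_cast
  have hca : (‖z‖ : ℂ) ≠ 0 := by exact_mod_cast habs.ne'
  field_simp
  exact Complex.re_add_im z

theorem hasDerivAt_creal {u : ℝ → ℂ} {u' : ℂ} {x : ℝ} (h : HasDerivAt u u' x) :
    HasDerivAt (fun t => (u t).re) u'.re x := by
  exact (Complex.reCLM.hasFDerivAt.comp_hasDerivAt x h)

theorem hasDerivAt_cimag {u : ℝ → ℂ} {u' : ℂ} {x : ℝ} (h : HasDerivAt u u' x) :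
    HasDerivAt (fun t => (u t).im) u'.im x := by
  exact (Complex.imCLM.hasFDerivAt.comp_hasDerivAt x h)

set_option maxHeartbeats 1000000 in
/-- For `g = [[a,b],[conj b, conj a]] ∈ SU(1,1)` and any continuous `f : ℂ → ℂ`,
`∫_0^{2π} f(M_g(e^{iφ})) |a + conj(b) e^{iφ}|^{−2} dφ = ∫_0^{2π} f(e^{iφ}) dφ`:
the Möbius transformation of the circle has Jacobian `|a + conj(b)z|^{−2}`. -/
theorem stmt_2 (a b : ℂ) (hab : ‖a‖ ^ 2 - ‖b‖ ^ 2 = 1)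
    (f : ℂ → ℂ) (hf : Continuous f) :
    (∫ φ in (0 : ℝ)..(2 * Real.pi),
        f ((b + conj a * Complex.exp (φ * Complex.I)) /
            (a + conj b * Complex.exp (φ * Complex.I))) *
          ((‖a + conj b * Complex.exp (φ * Complex.I)‖ ^ 2)⁻¹ : ℝ))
    = ∫ φ in (0 : ℝ)..(2 * Real.pi), f (Complex.exp (φ * Complex.I)) := by
  have haa : (1:ℝ) ≤ ‖a‖ ^ 2 := by nlinarith [norm_nonneg b, sq_nonneg (‖b‖)]
  have ha1 : (1:ℝ) ≤ ‖a‖ := by nlinarith [norm_nonneg a]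
  have hapos : (0:ℝ) < ‖a‖ := lt_of_lt_of_le one_pos ha1
  have ha : a ≠ 0 := by
    intro h; rw [h] at hapos; simp at hapos
  set c : ℂ := conj b / a with hc_def
  set z : ℝ → ℂ := fun φ => Complex.exp (φ * Complex.I) with hz_def
  have hzabs : ∀ φ, ‖z φ‖ = 1 := fun φ => Complex.norm_exp_ofReal_mul_I φ
  set w : ℝ → ℂ := fun φ => c * z φ with hw_def
  have hwabs : ∀ φ, ‖w φ‖ ^ 2 = ‖b‖ ^ 2 / ‖a‖ ^ 2 := by
    intro φ
    simp [hw_def, hc_def, map_mul, map_div₀, hzabs φ, Complex.norm_conj, norm_mul, norm_div]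
    ring
  have hwlt : ∀ φ, ‖w φ‖ < 1 := by
    intro φ
    have hsq : ‖w φ‖ ^ 2 < 1 := by
      rw [hwabs φ, div_lt_one (by positivity)]
      nlinarith
    nlinarith [norm_nonneg (w φ), sq_nonneg (‖w φ‖ - 1)]
  set u : ℝ → ℂ := fun φ => 1 + w φ with hu_def
  have hure : ∀ φ, 0 < (u φ).re := by
    intro φ
    have h1 : |(w φ).re| ≤ ‖w φ‖ := Complex.abs_re_le_norm _
    have h3 := neg_abs_le ((w φ).re)
    have h2 : (u φ).re = 1 + (w φ).re := by simp [hu_def]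
    have h4 := hwlt φ
    rw [h2]; linarith
  have hu0 : ∀ φ, u φ ≠ 0 := fun φ h => by
    have := hure φ; rw [h] at this; simp at this
  have hd : ∀ φ, a + conj b * z φ = a * u φ := by
    intro φ
    simp only [hu_def, hw_def, hc_def]
    field_simp
  have hd0 : ∀ φ, a + conj b * z φ ≠ 0 := by
    intro φ; rw [hd φ]; exact mul_ne_zero ha (hu0 φ)
  set α : ℝ → ℝ := fun φ => Real.arctan ((u φ).im / (u φ).re) with hα_def
  set θ : ℝ → ℝ := fun φ => φ - 2 * Complex.arg a - 2 * α φ with hθ_def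
  -- key pointwise identity
  have hz1 : ∀ φ, z φ * conj (z φ) = 1 := by
    intro φ
    rw [Complex.mul_conj]
    norm_cast
    rw [← Complex.sq_norm, hzabs φ]; norm_num
  have hkey : ∀ φ, Complex.exp (θ φ * Complex.I)
      = (b + conj a * z φ) / (a + conj b * z φ) := by
    intro φ
    have hA := Complex.norm_mul_exp_arg_mul_I a
    have hU := polarA (u φ) (hure φ)
    set A : ℂ := Complex.exp (Complex.arg a * Complex.I) with hA_def
    set U : ℂ := Complex.exp (α φ * Complex.I) with hU_def
    have hA0 : A ≠ 0 := Complex.exp_ne_zero _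
    have hU0 : U ≠ 0 := Complex.exp_ne_zero _
    have hAc : conj A = A⁻¹ := by
      rw [hA_def, ← Complex.exp_conj, ← Complex.exp_neg]
      congr 1
      simp [Complex.conj_I]
      try ring
    have hUc : conj U = U⁻¹ := by
      rw [hU_def, ← Complex.exp_conj, ← Complex.exp_neg]
      congr 1
      simp [Complex.conj_I]
      try ring
    have e : ((θ φ : ℝ) : ℂ) * Complex.I = (φ:ℂ) * Complex.I
        + (-(((Complex.arg a : ℝ):ℂ) * Complex.I) + -(((Complex.arg a : ℝ):ℂ) * Complex.I))
        + (-(((α φ : ℝ):ℂ) * Complex.I) + -(((α φ : ℝ):ℂ) * Complex.I)) := by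
      push_cast [hθ_def]
      ring
    have hsplit : Complex.exp (θ φ * Complex.I) = z φ * (A⁻¹ * A⁻¹) * (U⁻¹ * U⁻¹) := by
      rw [e, Complex.exp_add, Complex.exp_add, Complex.exp_add, Complex.exp_add,
        Complex.exp_neg, Complex.exp_neg]
    have hN : b + conj a * z φ = z φ * conj (a + conj b * z φ) := by
      rw [map_add, map_mul, Complex.conj_conj]
      linear_combination (-b) * hz1 φ
    have hr0 : ((‖a‖ * ‖u φ‖ : ℝ) : ℂ) ≠ 0 := by
      push_cast
      exact mul_ne_zero (by exact_mod_cast hapos.ne') (by exact_mod_cast (norm_pos_iff.mpr (hu0 φ)).ne')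
    have hD : a + conj b * z φ = ((‖a‖ * ‖u φ‖ : ℝ) : ℂ) * (A * U) := by
      conv_lhs => rw [hd φ, ← hA, ← hU]
      push_cast
      ring
    rw [hsplit, hN, hD, map_mul, map_mul, hAc, hUc, Complex.conj_ofReal]
    rw [eq_div_iff (mul_ne_zero hr0 (mul_ne_zero hA0 hU0))]
    field_simp
  -- the derivative
  have hθder : ∀ φ : ℝ, HasDerivAt θ
      (((‖a + conj b * Complex.exp (φ * Complex.I)‖) ^ 2)⁻¹) φ := by
    intro φ
    have hzder : HasDerivAt z (z φ * Complex.I) φ := by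
      have h1 : HasDerivAt (fun y : ℂ => Complex.exp (y * Complex.I))
          (Complex.exp ((φ:ℂ) * Complex.I) * Complex.I) (φ:ℂ) := by
        simpa [Function.comp_def] using (Complex.hasDerivAt_exp ((φ:ℂ) * Complex.I)).comp (φ:ℂ)
          ((hasDerivAt_id ((φ:ℂ))).mul_const Complex.I)
      simpa [hz_def] using h1.comp_ofReal
    have huder : HasDerivAt u (w φ * Complex.I) φ := by
      have h2 := (hzder.const_mul c).const_add 1
      simpa [hu_def, hw_def, mul_assoc] using h2
    have hreder := hasDerivAt_creal huder
    have himder := hasDerivAt_cimag huder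
    set p : ℝ := (w φ).re with hp_def
    set q : ℝ := (w φ).im with hq_def
    have hre_u : (u φ).re = 1 + p := by simp [hu_def, hp_def]
    have him_u : (u φ).im = q := by simp [hu_def, hq_def]
    have hre' : (w φ * Complex.I).re = -q := Complex.mul_I_re _
    have him' : (w φ * Complex.I).im = p := Complex.mul_I_im _
    have hrepos : 0 < 1 + p := by rw [← hre_u]; exact hure φ
    have hvder : HasDerivAt (fun t => (u t).im / (u t).re)
        ((p * (1 + p) - q * (-q)) / (1 + p) ^ 2) φ := by
      have h3 := himder.div hreder (by rw [hre_u]; exact hrepos.ne')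
      rw [him', hre', hre_u, him_u] at h3
      exact h3
    have hαder : HasDerivAt α
        ((1 / (1 + ((u φ).im / (u φ).re) ^ 2)) * ((p * (1 + p) - q * (-q)) / (1 + p) ^ 2)) φ :=
      (Real.hasDerivAt_arctan _).comp φ hvder
    have hfull : HasDerivAt θ
        (1 - 2 * ((1 / (1 + ((u φ).im / (u φ).re) ^ 2)) * ((p * (1 + p) - q * (-q)) / (1 + p) ^ 2))) φ := by
      have h1 : HasDerivAt (fun t : ℝ => t - 2 * Complex.arg a) 1 φ :=
        (hasDerivAt_id φ).sub_const _
      exact h1.sub (hαder.const_mul 2)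
    convert hfull using 1
    -- numeric identity
    have habs_d : ‖a + conj b * z φ‖ ^ 2
        = ‖a‖ ^ 2 * ((1 + p) ^ 2 + q ^ 2) := by
      rw [hd φ, norm_mul, mul_pow]
      congr 1
      rw [Complex.sq_norm, Complex.normSq_apply, hre_u, him_u]
      ring
    have hpq : p ^ 2 + q ^ 2 = ‖b‖ ^ 2 / ‖a‖ ^ 2 := by
      rw [← hwabs φ, Complex.sq_norm, Complex.normSq_apply, ← hp_def, ← hq_def]
      ring
    have hA1 : ‖a‖ ^ 2 * (1 - (p ^ 2 + q ^ 2)) = 1 := by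
      have h7 : ‖a‖ ^ 2 * (‖b‖ ^ 2 / ‖a‖ ^ 2)
          = ‖b‖ ^ 2 := by field_simp
      rw [hpq, mul_sub, mul_one, h7]
      linarith [hab]
    simp only [hz_def] at habs_d
    rw [habs_d, hre_u, him_u]
    have hden : (0:ℝ) < (1 + p) ^ 2 + q ^ 2 := by positivity
    field_simp
    linear_combination (-1 : ℝ) * hA1
  -- continuity of the Jacobian
  have hJcont : Continuous
      (fun φ : ℝ => ((‖a + conj b * Complex.exp (φ * Complex.I)‖) ^ 2)⁻¹) := by
    apply Continuous.inv₀
    · exact ((continuous_norm.comp (by continuity)).pow 2)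
    · intro φ
      exact pow_ne_zero 2 (norm_ne_zero_iff.mpr (hd0 φ))
  have hgcont : Continuous (fun t : ℝ => f (Complex.exp (t * Complex.I))) :=
    hf.comp (Complex.continuous_exp.comp (Complex.continuous_ofReal.mul continuous_const))
  -- change of variables
  have hsub : (∫ φ in (0:ℝ)..(2 * Real.pi),
      f ((b + conj a * Complex.exp (φ * Complex.I)) /
            (a + conj b * Complex.exp (φ * Complex.I))) *
          (((‖a + conj b * Complex.exp (φ * Complex.I)‖) ^ 2)⁻¹ : ℝ))
      = ∫ t in (θ 0)..(θ (2 * Real.pi)), f (Complex.exp (t * Complex.I)) := by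
    rw [← intervalIntegral.integral_comp_smul_deriv (f := θ)
      (f' := fun φ => ((‖a + conj b * Complex.exp (φ * Complex.I)‖) ^ 2)⁻¹)
      (g := fun t => f (Complex.exp (t * Complex.I)))
      (fun x _ => hθder x) hJcont.continuousOn hgcont]
    apply intervalIntegral.integral_congr
    intro φ _
    have hk := hkey φ
    simp only [hz_def] at hk
    simp only [Function.comp]
    rw [Complex.real_smul, hk, mul_comm]
  rw [hsub]
  -- periodicity
  have hu2 : u (2 * Real.pi) = u 0 := by
    simp only [hu_def, hw_def, hz_def]
    congr 2
    rw [show ((2 * Real.pi : ℝ) : ℂ) * Complex.I = 2 * Real.pi * Complex.I by push_cast; ring,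
      Complex.exp_two_pi_mul_I]
    simp
  have hα2 : α (2 * Real.pi) = α 0 := by simp only [hα_def, hu2]
  have hθval : θ (2 * Real.pi) = θ 0 + 2 * Real.pi := by
    simp only [hθ_def, hα2]
    ring
  have hper : Function.Periodic (fun t : ℝ => f (Complex.exp (t * Complex.I))) (2 * Real.pi) := by
    intro t
    have h5 : Complex.exp ((((t + 2 * Real.pi : ℝ)) : ℂ) * Complex.I)
        = Complex.exp ((t : ℂ) * Complex.I) := by
      push_cast
      rw [add_mul, Complex.exp_add, Complex.exp_two_pi_mul_I, mul_one]
    simp only [h5]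
  rw [hθval]
  have h6 := hper.intervalIntegral_add_eq (θ 0) 0
  rw [zero_add] at h6
  exact h6
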